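/- Let p/q be an even rational parameter with tune τ and even predecessor p'/q'. Then p' + q' = (p + q) − 2τ. -/

import Mathlib

/-- An *even rational parameter* is a fraction `p/q` with `p, q` coprime positive
integers, `p < q`, and `p*q` even. -/
def EvenParam (p q : ℕ) : Prop :=
  Nat.Coprime p q ∧ 0 < p ∧ p < q ∧ Even (p * q)

/-- `τ` is the *tune* of `p/q`: `0 < 2τ < p+q` and `2pτ ≡ ±1 (mod p+q)`. -/
def IsTune (p q τ : ℕ) : Prop :=
  0 < 2 * τ ∧ 2 * τ < p + q ∧
    (((p : ℤ) + q) ∣ 2 * p * τ - 1 ∨ ((p : ℤ) + q) ∣ 2 * p * τ + 1)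

/-- `p'/q'` is the *even predecessor* of `p/q`. -/
def IsEvenPred (p q p' q' : ℕ) : Prop :=
  Nat.Coprime p' q' ∧ p' < q' ∧ Even (p' * q') ∧
    ((p : ℤ) * q' - (q : ℤ) * p').natAbs = 1 ∧ p' + q' < p + q

/-- `κ` is the unique nonnegative integer with `κ/(2κ+1) ≤ τ/(p+q) < (κ+1)/(2κ+3)`. -/
def IsKappa (p q τ κ : ℕ) : Prop :=
  κ * (p + q) ≤ (2 * κ + 1) * τ ∧ (2 * κ + 3) * τ < (κ + 1) * (p + q)

/-- the even predecessor satisfies ω' = ω - 2τ. -/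
lemma odd_sum_of_coprime_even (m n : ℕ) (hc : Nat.Coprime m n) (he : Even (m * n)) :
    Odd (m + n) := by
  have h2 : ¬ (Even m ∧ Even n) := by
    rintro ⟨⟨a, ha⟩, ⟨b, hb⟩⟩
    have : (2 : ℕ) ∣ Nat.gcd m n := Nat.dvd_gcd ⟨a, by omega⟩ ⟨b, by omega⟩
    rw [hc] at this; omega
  rw [Nat.even_mul] at he
  rcases Nat.even_or_odd m with hm | hm <;> rcases Nat.even_or_odd n with hn | hn
  · exact absurd ⟨hm, hn⟩ h2
  · exact hm.add_odd hn
  · exact hm.add_even hn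
  · exact absurd (he.resolve_left (Nat.not_even_iff_odd.mpr hm)) (Nat.not_even_iff_odd.mpr hn)

theorem evenPred_omega (p q τ p' q' : ℕ) (h : EvenParam p q)
    (hτ : IsTune p q τ) (hpred : IsEvenPred p q p' q') :
    ((p' : ℤ) + q') = ((p : ℤ) + q) - 2 * τ := by
  obtain ⟨hc, hp, hpq, heven⟩ := h
  obtain ⟨hτ0, hτlt, hτd⟩ := hτ
  obtain ⟨hc', hlt', heven', hdet, hsum⟩ := hpred
  set ω : ℤ := (p : ℤ) + q with hω
  have hωpos : 0 < ω := by positivity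
  have hodd : Odd (p + q) := odd_sum_of_coprime_even p q hc heven
  have hodd' : Odd (p' + q') := odd_sum_of_coprime_even p' q' hc' heven'
  -- coprimality of p and ω
  have hcop : IsCoprime (ω) (p : ℤ) := by
    rw [Int.isCoprime_iff_gcd_eq_one, hω]
    have : ((p : ℤ) + q) = ((p + q : ℕ) : ℤ) := by push_cast; ring
    rw [this, Int.gcd_natCast_natCast]
    have : Nat.Coprime p (p + q) := by
      simpa [Nat.add_comm] using (Nat.coprime_add_self_right (m := p) (n := q)).mpr hc
    simpa [Nat.gcd_comm] using this
  -- p * ω' ≡ ±1 mod ω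
  have hdet' : (p : ℤ) * q' - (q : ℤ) * p' = 1 ∨ (p : ℤ) * q' - (q : ℤ) * p' = -1 := by
    rcases Int.natAbs_eq ((p : ℤ) * q' - (q : ℤ) * p') with h1 | h1 <;> rw [hdet] at h1 <;> omega
  have key1 : ω ∣ (p : ℤ) * (p' + q') - 1 ∨ ω ∣ (p : ℤ) * (p' + q') + 1 := by
    rcases hdet' with h1 | h1
    · left; exact ⟨p', by rw [hω]; linear_combination h1⟩
    · right; exact ⟨p', by rw [hω]; linear_combination h1⟩
  -- ω' = 2τ or ω' + 2τ = ω cases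
  have hτd' : ω ∣ (p : ℤ) * (2 * τ) - 1 ∨ ω ∣ (p : ℤ) * (2 * τ) + 1 := by
    rcases hτd with h1 | h1
    · left; convert h1 using 2; ring
    · right; convert h1 using 2; ring
  have hbound : (0 : ℤ) < (p' : ℤ) + q' := by
    have : 0 < q' := by omega
    push_cast; omega
  have hbound2 : ((p' : ℤ) + q') < ω := by rw [hω]; push_cast; omega
  have h2τ : (0 : ℤ) < 2 * τ ∧ 2 * (τ : ℤ) < ω := by rw [hω]; constructor <;> push_cast <;> omega
  -- Case e = e': ω ∣ ω' - 2τ → ω' = 2τ, parity contradiction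
  have parity_contra : ¬ ((p' : ℤ) + q' = 2 * τ) := by
    intro hEq
    obtain ⟨t, ht⟩ := hodd'
    have : (p' : ℕ) + q' = 2 * τ := by omega
    omega
  have main : ω ∣ ((p' : ℤ) + q') - 2 * τ ∨ ω ∣ ((p' : ℤ) + q') + 2 * τ := by
    rcases key1 with h1 | h1 <;> rcases hτd' with h2 | h2
    · left
      have hd : ω ∣ (p : ℤ) * (((p' : ℤ) + q') - 2 * τ) := by
        have := dvd_sub h1 h2; convert this using 1; rfl; ring
      exact hcop.dvd_of_dvd_mul_left hd
    · right
      have hd : ω ∣ (p : ℤ) * (((p' : ℤ) + q') + 2 * τ) := by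
        have := dvd_add h1 h2; convert this using 1; rfl; ring
      exact hcop.dvd_of_dvd_mul_left hd
    · right
      have hd : ω ∣ (p : ℤ) * (((p' : ℤ) + q') + 2 * τ) := by
        have := dvd_add h1 h2; convert this using 1; rfl; ring
      exact hcop.dvd_of_dvd_mul_left hd
    · left
      have hd : ω ∣ (p : ℤ) * (((p' : ℤ) + q') - 2 * τ) := by
        have := dvd_sub h1 h2; convert this using 1; rfl; ring
      exact hcop.dvd_of_dvd_mul_left hd
  rcases main with hd | hd
  · exfalso
    have habs : |((p' : ℤ) + q') - 2 * τ| < ω := by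
      rw [abs_lt]; constructor <;> omega
    have := Int.eq_zero_of_abs_lt_dvd hd habs
    exact parity_contra (by omega)
  · obtain ⟨k, hk⟩ := hd
    have hk0 : 0 < k := by nlinarith
    have hk2 : k < 2 := by nlinarith
    have : k = 1 := by omega
    rw [this, mul_one] at hk
    omega
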